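/- Let Δ_X = E_0 ⊆ E_1 ⊆ … ⊆ E_m be an increasing sequence of G-invariant equivalence relations on a transitive G-space X, and K ⊆ X a subset such that: (1) the projection K/E_m is a kaleidoscopical configuration in the quotient G-space X/E_m; (2) for every i < m the set K is E_{i+1}/E_i-parallel or E_{i+1}/E_i-orthogonal. Then K is a kaleidoscopical configuration in X. -/

import Mathlib

open Pointwise

universe u v

lemma step_lemma {G : Type v} {X : Type u} [Group G] [MulAction G X]
    (htrans : ∀ x y : X, ∃ g : G, g • x = y)
    (Es Fs : Setoid X) (hle : Es ≤ Fs)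
    (hinvE : ∀ (g : G) (x y : X), Es.r x y → Es.r (g • x) (g • y))
    (hinvF : ∀ (g : G) (x y : X), Fs.r x y → Fs.r (g • x) (g • y))
    (K : Set X)
    (hsp : (∀ x ∈ K, {y | ∃ k ∈ K, Es.r k y} ∩ {y | Fs.r x y} = {y | Fs.r x y}) ∨
           (∀ x ∈ K, {y | ∃ k ∈ K, Es.r k y} ∩ {y | Fs.r x y} = {y | Es.r x y}))
    (hF : ∃ (C : Type u) (χ : Quotient Fs → C), Function.Surjective χ ∧
        ∀ g : G, Set.BijOn χ (Quotient.mk Fs '' (g • K)) Set.univ) :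
    ∃ (C : Type u) (χ : Quotient Es → C), Function.Surjective χ ∧
        ∀ g : G, Set.BijOn χ (Quotient.mk Es '' (g • K)) Set.univ := by
  obtain ⟨C, χ, hsurj, hbij⟩ := hF
  have hle' : ∀ {x y : X}, Es.r x y → Fs.r x y := fun h => hle h
  -- natural map Quotient Es → Quotient Fs
  set toF : Quotient Es → Quotient Fs :=
    Quotient.lift (Quotient.mk Fs) (fun a b h => Quotient.sound (hle' h)) with htoF
  rcases hsp with hpar | horth
  · -- parallel case
    rcases isEmpty_or_nonempty X with hX | ⟨⟨x₀⟩⟩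
    · have hQ : IsEmpty (Quotient Es) :=
        ⟨fun q => Quotient.inductionOn q fun x => isEmptyElim x⟩
      refine ⟨Quotient Es, id, fun q => ⟨q, rfl⟩, fun g => ?_⟩
      exact ⟨fun _ _ => Set.mem_univ _, fun a _ b _ h => h,
        fun q _ => isEmptyElim q⟩
    -- choose representatives of F-classes in the orbit of x₀
    have hex : ∀ c : Quotient Fs, ∃ g : G, Quotient.mk Fs (g • x₀) = c := by
      intro c
      induction c using Quotient.inductionOn with
      | h y => obtain ⟨g, hg⟩ := htrans x₀ y; exact ⟨g, by rw [hg]⟩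
    choose gF hgF using hex
    -- action of G on Quotient Es
    set actE : G → Quotient Es → Quotient Es :=
      fun g => Quotient.map (g • ·) (fun a b h => hinvE g a b h) with hactE
    have actE_mk : ∀ (g : G) (x : X), actE g (Quotient.mk Es x) = Quotient.mk Es (g • x) :=
      fun g x => rfl
    have actE_inv : ∀ (g : G) (q : Quotient Es), actE g⁻¹ (actE g q) = q := by
      intro g q
      induction q using Quotient.inductionOn with
      | h y => rw [actE_mk, actE_mk, inv_smul_smul]
    have actE_inv' : ∀ (g : G) (q : Quotient Es), actE g (actE g⁻¹ q) = q := by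
      intro g q
      induction q using Quotient.inductionOn with
      | h y => rw [actE_mk, actE_mk, smul_inv_smul]
    have toF_mk : ∀ x : X, toF (Quotient.mk Es x) = Quotient.mk Fs x := fun x => rfl
    -- the fiber over the class of x₀
    set D : Type u := {d : Quotient Es // toF d = Quotient.mk Fs x₀} with hD
    have hmem : ∀ q : Quotient Es, toF (actE (gF (toF q))⁻¹ q) = Quotient.mk Fs x₀ := by
      intro q
      induction q using Quotient.inductionOn with
      | h y =>
        rw [actE_mk, toF_mk]
        have h1 : Fs.r (gF (toF (Quotient.mk Es y)) • x₀) y := by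
          have := hgF (toF (Quotient.mk Es y))
          rw [toF_mk] at this
          exact Quotient.exact this
        have h2 := hinvF (gF (toF (Quotient.mk Es y)))⁻¹ _ _ h1
        rw [inv_smul_smul] at h2
        exact Quotient.sound (Fs.symm h2)
    set δ : Quotient Es → D := fun q => ⟨actE (gF (toF q))⁻¹ q, hmem q⟩ with hδ
    -- key: combine
    refine ⟨C × D, fun q => (χ (toF q), δ q), ?_, ?_⟩
    · rintro ⟨c, d⟩
      obtain ⟨w, hw⟩ := hsurj c
      refine ⟨actE (gF w) d.1, ?_⟩
      have htf : toF (actE (gF w) d.1) = w := by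
        obtain ⟨q, hq⟩ := d
        induction q using Quotient.inductionOn with
        | h y =>
          rw [actE_mk, toF_mk]
          rw [toF_mk] at hq
          have h1 : Fs.r y x₀ := Quotient.exact hq
          have h2 := hinvF (gF w) _ _ h1
          exact (Quotient.sound h2).trans (hgF w)
      have hδd : δ (actE (gF w) d.1) = d := by
        apply Subtype.ext
        simp only [hδ]
        rw [htf, actE_inv]
      dsimp only
      rw [htf, hδd, hw]
    · intro g
      refine ⟨fun _ _ => Set.mem_univ _, ?_, ?_⟩
      · rintro p ⟨a, ha, rfl⟩ p' ⟨b, hb, rfl⟩ heq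
        have h1 : χ (toF (Quotient.mk Es a)) = χ (toF (Quotient.mk Es b)) :=
          congrArg Prod.fst heq
        rw [toF_mk, toF_mk] at h1
        have h2 : Quotient.mk Fs a = Quotient.mk Fs b :=
          (hbij g).injOn ⟨a, ha, rfl⟩ ⟨b, hb, rfl⟩ h1
        have h3 : toF (Quotient.mk Es a) = toF (Quotient.mk Es b) := by
          rw [toF_mk, toF_mk]; exact h2
        have h4 : δ (Quotient.mk Es a) = δ (Quotient.mk Es b) := congrArg Prod.snd heq
        have h5 : (δ (Quotient.mk Es a)).1 = (δ (Quotient.mk Es b)).1 := by rw [h4]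
        simp only [hδ] at h5
        rw [h3] at h5
        have := congrArg (actE (gF (toF (Quotient.mk Es b)))) h5
        rwa [actE_inv', actE_inv'] at this
      · rintro ⟨c, d⟩ -
        obtain ⟨w, ⟨z, ⟨k, hk, rfl⟩, rfl⟩, hw⟩ := (hbij g).surjOn (Set.mem_univ c)
        -- w = Quotient.mk Fs (g • k), χ w = c
        set q : Quotient Es := actE (gF (Quotient.mk Fs (g • k))) d.1 with hq
        have htf : toF q = Quotient.mk Fs (g • k) := by
          obtain ⟨d1, hd1⟩ := d
          simp only [hq]
          induction d1 using Quotient.inductionOn with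
          | h y =>
            rw [actE_mk, toF_mk]
            rw [toF_mk] at hd1
            have h1 : Fs.r y x₀ := Quotient.exact hd1
            have h2 := hinvF (gF (Quotient.mk Fs (g • k))) _ _ h1
            exact (Quotient.sound h2).trans (hgF _)
        have hδd : δ q = d := by
          apply Subtype.ext
          simp only [hδ]
          rw [htf, hq, actE_inv]
        -- q ∈ image of g • K
        obtain ⟨z, hz⟩ := Quotient.exists_rep q
        have hzF : Fs.r (g • k) z := by
          have : toF (Quotient.mk Es z) = Quotient.mk Fs (g • k) := by rw [hz]; exact htf
          rw [toF_mk] at this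
          exact Fs.symm (Quotient.exact this)
        have hkz : Fs.r k (g⁻¹ • z) := by
          have := hinvF g⁻¹ _ _ hzF
          rwa [inv_smul_smul] at this
        have hmem2 : (g⁻¹ • z) ∈ {y | ∃ k' ∈ K, Es.r k' y} := by
          have := (hpar k hk).symm
          have h6 : (g⁻¹ • z) ∈ ({y | ∃ k' ∈ K, Es.r k' y} ∩ {y | Fs.r k y}) := by
            rw [hpar k hk]; exact hkz
          exact h6.1
        obtain ⟨k', hk', hk'z⟩ := hmem2
        have h7 : Es.r (g • k') z := by
          have := hinvE g _ _ hk'z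
          rwa [smul_inv_smul] at this
        refine ⟨q, ⟨g • k', ⟨k', hk', rfl⟩, ?_⟩, ?_⟩
        · rw [← hz]; exact Quotient.sound h7
        · dsimp only
          rw [htf, hδd, hw]
  · -- orthogonal case
    refine ⟨C, fun q => χ (toF q), ?_, ?_⟩
    · intro c
      obtain ⟨w, hw⟩ := hsurj c
      obtain ⟨y, rfl⟩ := Quotient.exists_rep w
      exact ⟨Quotient.mk Es y, hw⟩
    · intro g
      refine ⟨fun _ _ => Set.mem_univ _, ?_, ?_⟩
      · rintro p ⟨a, ⟨k, hk, rfl⟩, rfl⟩ p' ⟨b, ⟨k', hk', rfl⟩, rfl⟩ heq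
        have h2 : Quotient.mk Fs (g • k) = Quotient.mk Fs (g • k') :=
          (hbij g).injOn ⟨g • k, ⟨k, hk, rfl⟩, rfl⟩ ⟨g • k', ⟨k', hk', rfl⟩, rfl⟩ heq
        have h3 : Fs.r (g • k) (g • k') := Quotient.exact h2
        have h4 : Fs.r k k' := by
          have := hinvF g⁻¹ _ _ h3
          rwa [inv_smul_smul, inv_smul_smul] at this
        have h5 : k' ∈ ({y | ∃ k'' ∈ K, Es.r k'' y} ∩ {y | Fs.r k y}) :=
          ⟨⟨k', hk', Es.refl k'⟩, h4⟩
        rw [horth k hk] at h5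
        have h6 : Es.r (g • k) (g • k') := hinvE g _ _ h5
        exact Quotient.sound h6
      · rintro c -
        obtain ⟨w, ⟨z, hz, rfl⟩, hw⟩ := (hbij g).surjOn (Set.mem_univ c)
        exact ⟨Quotient.mk Es z, ⟨z, hz, rfl⟩, hw⟩
/-- Let `Δ_X = E_0 ⊆ E_1 ⊆ … ⊆ E_m` be an increasing sequence of
`G`-invariant equivalence relations on a transitive `G`-space `X` and `K ⊆ X` such that
(1) the projection `K/E_m` is kaleidoscopical in the quotient `G`-space `X/E_m`, and
(2) for every `i < m` the set `K` is `E_{i+1}/E_i`-parallel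
(`[K]_{E_i} ∩ [x]_{E_{i+1}} = [x]_{E_{i+1}}` for all `x ∈ K`) or `E_{i+1}/E_i`-orthogonal
(`[K]_{E_i} ∩ [x]_{E_{i+1}} = [x]_{E_i}` for all `x ∈ K`). Then `K` is a kaleidoscopical
configuration in `X`. -/
theorem stmt11 {G : Type v} {X : Type u} [Group G] [MulAction G X]
    (htrans : ∀ x y : X, ∃ g : G, g • x = y)
    (m : ℕ) (E : Fin (m + 1) → Setoid X)
    (hmono : Monotone E) (h0 : E 0 = ⊥)
    (hinv : ∀ (i : Fin (m + 1)) (g : G) (x y : X), (E i).r x y → (E i).r (g • x) (g • y))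
    (K : Set X)
    (hquot : ∃ (C : Type u) (χ : Quotient (E (Fin.last m)) → C), Function.Surjective χ ∧
        ∀ g : G, Set.BijOn χ (Quotient.mk (E (Fin.last m)) '' (g • K)) Set.univ)
    (hsplit : ∀ i : Fin m,
        (∀ x ∈ K, {y | ∃ k ∈ K, (E i.castSucc).r k y} ∩ {y | (E i.succ).r x y}
            = {y | (E i.succ).r x y}) ∨
        (∀ x ∈ K, {y | ∃ k ∈ K, (E i.castSucc).r k y} ∩ {y | (E i.succ).r x y}
            = {y | (E i.castSucc).r x y})) :
    ∃ (C : Type u) (χ : X → C), Function.Surjective χ ∧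
      ∀ g : G, Set.BijOn χ (g • K) Set.univ := by
  set P : Fin (m + 1) → Prop := fun i =>
    ∃ (C : Type u) (χ : Quotient (E i) → C), Function.Surjective χ ∧
      ∀ g : G, Set.BijOn χ (Quotient.mk (E i) '' (g • K)) Set.univ with hP
  have key : ∀ j : ℕ, (hj : j ≤ m) → P ⟨m - j, by omega⟩ := by
    intro j
    induction j with
    | zero =>
      intro _
      have : (⟨m - 0, by omega⟩ : Fin (m + 1)) = Fin.last m := by
        apply Fin.ext; simp [Fin.last]
      rw [this]
      exact hquot
    | succ j ih =>
      intro hj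
      have ihP := ih (by omega)
      set i : Fin m := ⟨m - (j + 1), by omega⟩ with hi
      have hcs : i.castSucc = (⟨m - (j + 1), by omega⟩ : Fin (m + 1)) := by
        apply Fin.ext; simp [hi]
      have hsu : i.succ = (⟨m - j, by omega⟩ : Fin (m + 1)) := by
        apply Fin.ext; simp [hi]; omega
      have hle : E i.castSucc ≤ E i.succ := hmono (le_of_lt (Fin.castSucc_lt_succ (i := i)))
      have := step_lemma htrans (E i.castSucc) (E i.succ) hle
        (hinv i.castSucc) (hinv i.succ) K (hsplit i) (by rw [hsu]; exact ihP)
      rw [hcs] at this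
      exact this
  have P0 : P 0 := by
    have := key m (le_refl m)
    have h00 : (⟨m - m, by omega⟩ : Fin (m + 1)) = 0 := by
      apply Fin.ext; simp
    rwa [h00] at this
  obtain ⟨C, χ, hsurj, hbij⟩ := P0
  have hbot : ∀ x y : X, (E 0).r x y → x = y := by
    rw [h0]; exact fun x y h => h
  refine ⟨C, fun x => χ (Quotient.mk (E 0) x), ?_, ?_⟩
  · intro c
    obtain ⟨q, hq⟩ := hsurj c
    obtain ⟨x, rfl⟩ := Quotient.exists_rep q
    exact ⟨x, hq⟩
  · intro g
    refine ⟨fun _ _ => Set.mem_univ _, ?_, ?_⟩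
    · intro a ha b hb heq
      have h1 : Quotient.mk (E 0) a = Quotient.mk (E 0) b :=
        (hbij g).injOn ⟨a, ha, rfl⟩ ⟨b, hb, rfl⟩ heq
      exact hbot a b (Quotient.exact h1)
    · rintro c -
      obtain ⟨q, ⟨x, hx, rfl⟩, hq⟩ := (hbij g).surjOn (Set.mem_univ c)
      exact ⟨x, hx, hq⟩
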